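/- arXiv:2307.09129 — 4 statements merged into one kernel-verified Lean document; each statement's English description precedes it below -/
import Mathlib

section
/- Let p be a prime, r a positive integer and n = p^r. Fix real numbers α ≠ 0, β, γ, η. Then the characteristic polynomial of the universal adjacency matrix U(P(Z_n)) equals (X − (α(p^r − 1) + β(p^r − 1) + η p^r + γ))·(X − (−α + β(p^r − 1) + γ))^{p^r − 1}; that is, U(P(Z_{p^r})) has the eigenvalue α(p^r − 1) + β(p^r − 1) + η p^r + γ with multiplicity 1 (with eigenvector the all-ones vector) and the eigenvalue −α + β(p^r − 1) + γ with multiplicity p^r − 1. -/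
open Matrix Polynomial

/-- The (undirected) power graph of an additive group: distinct `u`, `v` are adjacent
iff one is an integer multiple of the other. -/
def addPowerGraph (G : Type*) [AddGroup G] : SimpleGraph G where
  Adj u v := u ≠ v ∧ ∃ m : ℤ, u = m • v ∨ v = m • u
  symm := by
    constructor
    rintro u v ⟨huv, m, hm | hm⟩
    · exact ⟨huv.symm, m, Or.inr hm⟩
    · exact ⟨huv.symm, m, Or.inl hm⟩
  loopless := ⟨fun u h => h.1 rfl⟩

/-- The universal adjacency matrix `U(G) = α A + β D + γ I + η J` of a finite graph. -/
noncomputable def univAdj {V : Type*} [Fintype V] (G : SimpleGraph V)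
    (α β γ η : ℝ) : Matrix V V ℝ :=
  letI := Classical.decEq V
  letI : DecidableRel G.Adj := Classical.decRel _
  α • G.adjMatrix ℝ + β • Matrix.diagonal (fun v => (G.degree v : ℝ))
    + γ • (1 : Matrix V V ℝ) + η • Matrix.of (fun _ _ => (1 : ℝ))

lemma zmod_multiple_of_dvd {n : ℕ} [NeZero n] (u v : ZMod n)
    (h : Nat.gcd (v.val) n ∣ Nat.gcd (u.val) n) : ∃ m : ℤ, u = m • v := by
  have hdvd : (Nat.gcd (v.val) n : ℤ) ∣ (u.val : ℤ) :=
    Int.natCast_dvd_natCast.2 (h.trans (Nat.gcd_dvd_left _ _))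
  obtain ⟨c, hc⟩ := hdvd
  set A := Int.gcdA (v.val : ℤ) (n : ℤ)
  set B := Int.gcdB (v.val : ℤ) (n : ℤ)
  have hbez : (Nat.gcd (v.val) n : ℤ) = (v.val : ℤ) * A + (n : ℤ) * B := by
    have := Int.gcd_eq_gcd_ab (v.val : ℤ) (n : ℤ)
    rwa [Int.gcd_natCast_natCast] at this
  refine ⟨c * A, ?_⟩
  have key : ((n : ℤ)) ∣ ((u.val : ℤ) - (c * A) * (v.val : ℤ)) :=
    ⟨c * B, by linear_combination hc + c * hbez⟩
  have h0 : (((u.val : ℤ) - (c * A) * (v.val : ℤ) : ℤ) : ZMod n) = 0 :=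
    (ZMod.intCast_zmod_eq_zero_iff_dvd _ n).2 key
  have hu : ((u.val : ℕ) : ZMod n) = u := ZMod.natCast_rightInverse u
  have hv : ((v.val : ℕ) : ZMod n) = v := ZMod.natCast_rightInverse v
  rw [zsmul_eq_mul]
  push_cast
  push_cast at h0
  rw [hu, hv] at h0
  linear_combination h0

lemma addPowerGraph_zmod_eq_top (p : ℕ) (hp : p.Prime) (r : ℕ) [NeZero (p ^ r)] :
    addPowerGraph (ZMod (p ^ r)) = ⊤ := by
  ext u v
  simp only [addPowerGraph, SimpleGraph.top_adj]
  constructor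
  · rintro ⟨h, -⟩; exact h
  · intro h
    refine ⟨h, ?_⟩
    obtain ⟨i, hi, hgu⟩ := (Nat.dvd_prime_pow hp).1 (Nat.gcd_dvd_right u.val (p ^ r))
    obtain ⟨j, hj, hgv⟩ := (Nat.dvd_prime_pow hp).1 (Nat.gcd_dvd_right v.val (p ^ r))
    rcases le_total i j with hij | hij
    · obtain ⟨m, hm⟩ := zmod_multiple_of_dvd v u (by rw [hgu, hgv]; exact pow_dvd_pow p hij)
      exact ⟨m, Or.inr hm⟩
    · obtain ⟨m, hm⟩ := zmod_multiple_of_dvd u v (by rw [hgu, hgv]; exact pow_dvd_pow p hij)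
      exact ⟨m, Or.inl hm⟩

lemma top_degree' {V : Type*} [Fintype V] (u : V)
    (instF : Fintype ((⊤ : SimpleGraph V).neighborSet u)) :
    @SimpleGraph.degree V ⊤ u instF = Fintype.card V - 1 := by
  classical
  convert SimpleGraph.complete_graph_degree u using 2

lemma univAdj_top {V : Type*} [Fintype V] [DecidableEq V] [Nonempty V] (α β γ η : ℝ) :
    univAdj (⊤ : SimpleGraph V) α β γ η =
      (-α + β * ((Fintype.card V : ℝ) - 1) + γ) • (1 : Matrix V V ℝ)
        + (α + η) • Matrix.of (fun _ _ => (1 : ℝ)) := by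
  classical
  have hc : ((Fintype.card V - 1 : ℕ) : ℝ) = (Fintype.card V : ℝ) - 1 := by
    have := Fintype.card_pos (α := V)
    push_cast [Nat.cast_sub this]
    ring
  ext u v
  rcases eq_or_ne u v with rfl | huv
  · simp [univAdj, Matrix.one_apply, hc, top_degree']
    ring
  · simp [univAdj, Matrix.one_apply_ne huv, Matrix.diagonal_apply_ne _ huv, huv]

lemma det_smul_one_add_smul_ones {V : Type*} [Fintype V] [DecidableEq V] [Nonempty V]
    (a b : ℝ) (ha : a ≠ 0) :
    Matrix.det (a • (1 : Matrix V V ℝ) + b • Matrix.of (fun _ _ => (1 : ℝ))) =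
      a ^ (Fintype.card V - 1) * (a + (Fintype.card V : ℝ) * b) := by
  have hfac : a • (1 : Matrix V V ℝ) + b • Matrix.of (fun _ _ => (1 : ℝ)) =
      a • ((1 : Matrix V V ℝ) +
        (Matrix.replicateCol Unit (fun _ => b / a) : Matrix V Unit ℝ) *
          (Matrix.replicateRow Unit (fun _ => (1 : ℝ)) : Matrix Unit V ℝ)) := by
    ext i j
    rcases eq_or_ne i j with rfl | hij
    · simp [Matrix.one_apply, Matrix.mul_apply]
      field_simp
    · simp [Matrix.one_apply_ne hij, Matrix.mul_apply]
      field_simp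
  rw [hfac, Matrix.det_smul, Matrix.det_one_add_replicateCol_mul_replicateRow]
  have hdot : ((fun _ => (1 : ℝ)) : V → ℝ) ⬝ᵥ ((fun _ => b / a) : V → ℝ) = (Fintype.card V : ℝ) * (b / a) := by
    simp [dotProduct, Finset.sum_const, Finset.card_univ, nsmul_eq_mul]
  rw [hdot]
  have hcard : 0 < Fintype.card V := Fintype.card_pos
  have : a ^ Fintype.card V = a ^ (Fintype.card V - 1) * a := by
    rw [← pow_succ, Nat.sub_add_cancel hcard]
  rw [this]
  field_simp

lemma charpoly_smul_one_add_smul_ones {V : Type*} [Fintype V] [DecidableEq V] [Nonempty V]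
    (c d : ℝ) :
    Matrix.charpoly (c • (1 : Matrix V V ℝ) + d • Matrix.of (fun _ _ => (1 : ℝ))) =
      (X - C (c + (Fintype.card V : ℝ) * d)) * (X - C c) ^ (Fintype.card V - 1) := by
  set M := c • (1 : Matrix V V ℝ) + d • Matrix.of (fun _ _ => (1 : ℝ)) with hM
  have heval : ∀ x : ℝ, eval x (Matrix.charpoly M) = Matrix.det (x • 1 - M) := by
    intro x
    rw [Matrix.charpoly, ← Polynomial.coe_evalRingHom, RingHom.map_det]
    congr 1
    ext i j
    rcases eq_or_ne i j with rfl | hij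
    · simp [Matrix.charmatrix_apply_eq, Matrix.one_apply]
    · simp [Matrix.charmatrix_apply_ne _ _ _ hij, Matrix.one_apply_ne hij]
  apply Polynomial.eq_of_infinite_eval_eq
  apply Set.Infinite.mono (s := {c}ᶜ)
  · intro x hx
    have hxc : x - c ≠ 0 := sub_ne_zero.2 hx
    have hrw : x • (1 : Matrix V V ℝ) - M =
        (x - c) • (1 : Matrix V V ℝ) + (-d) • Matrix.of (fun _ _ => (1 : ℝ)) := by
      rw [hM]
      ext i j
      simp [Matrix.one_apply]
      split_ifs <;> ring
    simp only [Set.mem_setOf_eq, heval, hrw,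
      det_smul_one_add_smul_ones _ _ hxc]
    simp [eval_pow]
    ring
  · exact (Set.finite_singleton c).infinite_compl

/-- For `n = p^r` (`p` prime, `r ≥ 1`), the characteristic polynomial of
`U(P(ℤ_{p^r}))` is `(X - (α(p^r-1) + β(p^r-1) + η p^r + γ)) ⬝ (X - (-α + β(p^r-1) + γ))^{p^r-1}`;
in particular `α(p^r-1) + β(p^r-1) + η p^r + γ` is an eigenvalue of multiplicity `1` with the
all-ones vector as eigenvector, and `-α + β(p^r-1) + γ` has multiplicity `p^r - 1`. -/
theorem univAdj_powerGraph_zmod_primePow (p : ℕ) (hp : p.Prime) (r : ℕ) (hr : 0 < r)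
    (α β γ η : ℝ) (hα : α ≠ 0) :
    haveI : NeZero (p ^ r) := ⟨pow_ne_zero r hp.ne_zero⟩
    Matrix.charpoly (univAdj (addPowerGraph (ZMod (p ^ r))) α β γ η) =
        (X - C (α * ((p : ℝ) ^ r - 1) + β * ((p : ℝ) ^ r - 1) + η * (p : ℝ) ^ r + γ))
          * (X - C (-α + β * ((p : ℝ) ^ r - 1) + γ)) ^ (p ^ r - 1) ∧
      (univAdj (addPowerGraph (ZMod (p ^ r))) α β γ η).mulVec (fun _ => 1) =
        (α * ((p : ℝ) ^ r - 1) + β * ((p : ℝ) ^ r - 1) + η * (p : ℝ) ^ r + γ) •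
          ((fun _ => 1) : ZMod (p ^ r) → ℝ) := by
  haveI : NeZero (p ^ r) := ⟨pow_ne_zero r hp.ne_zero⟩
  have hcard : Fintype.card (ZMod (p ^ r)) = p ^ r := ZMod.card _
  have hcardR : ((Fintype.card (ZMod (p ^ r)) : ℕ) : ℝ) = (p : ℝ) ^ r := by
    rw [hcard]; push_cast; ring
  rw [addPowerGraph_zmod_eq_top p hp r, univAdj_top, hcardR]
  constructor
  · rw [charpoly_smul_one_add_smul_ones, hcardR, hcard]
    have he : (-α + β * ((p : ℝ) ^ r - 1) + γ) + (p : ℝ) ^ r * (α + η) =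
        α * ((p : ℝ) ^ r - 1) + β * ((p : ℝ) ^ r - 1) + η * (p : ℝ) ^ r + γ := by ring
    rw [he]
  · funext v
    simp [Matrix.mulVec, dotProduct, Matrix.one_apply, mul_add, Finset.sum_add_distrib,
      Finset.sum_ite_eq, Finset.card_univ, hcardR]
    ring
end

section
/- Let p and q be distinct primes and fix real numbers α, β, γ, η with η ≠ 0 and α + η = 0. Then the following real numbers are eigenvalues of the universal adjacency matrix U(P(Z_{pq})): β(pq − 1) + γ + η, and the two numbers ( β(2pq − p − q) + 2(η + γ) ± √( β²(p − q)² + 4η²(p − 1)(q − 1) ) ) / 2. -/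
open Matrix

section Aux

open Finset

lemma field_dvd_iff {K : Type*} [Field K] (a b : K) : a ∣ b ↔ (a = 0 → b = 0) := by
  constructor
  · rintro ⟨c, rfl⟩ h; rw [h, zero_mul]
  · intro h
    by_cases ha : a = 0
    · rw [ha, h ha]
    · exact (isUnit_iff_ne_zero.mpr ha).dvd

lemma sum_ite_zero_const {K : Type*} [Fintype K] [DecidableEq K] [Zero K] (c d : ℝ) :
    ∑ a : K, (if a = 0 then c else d) = c + ((Fintype.card K : ℝ) - 1) * d := by
  have h : ∀ a : K, (if a = 0 then c else d) = (if a = 0 then c - d else 0) + d := by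
    intro a; by_cases h : a = 0 <;> simp [h]
  rw [Finset.sum_congr rfl fun a _ => h a, Finset.sum_add_distrib,
    Finset.sum_ite_eq' Finset.univ (0 : K) (fun _ => c - d)]
  simp [Finset.card_univ]
  ring

lemma sum_region {K L : Type*} [Fintype K] [DecidableEq K] [Zero K]
    [Fintype L] [DecidableEq L] [Zero L] (v00 v01 v10 v11 : ℝ) :
    ∑ z : K × L, (if z.1 = 0 then if z.2 = 0 then v00 else v01
        else if z.2 = 0 then v10 else v11)
      = v00 + ((Fintype.card L : ℝ) - 1) * v01
        + ((Fintype.card K : ℝ) - 1) * v10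
        + ((Fintype.card K : ℝ) - 1) * ((Fintype.card L : ℝ) - 1) * v11 := by
  rw [Fintype.sum_prod_type]
  have h : ∀ a : K, (∑ b : L, if a = 0 then if b = 0 then v00 else v01
      else if b = 0 then v10 else v11)
      = if a = 0 then v00 + ((Fintype.card L : ℝ) - 1) * v01
        else v10 + ((Fintype.card L : ℝ) - 1) * v11 := by
    intro a
    by_cases h : a = 0 <;> simp only [h, if_true, if_false, sum_ite_zero_const]
  rw [Finset.sum_congr rfl fun a _ => h a, sum_ite_zero_const]
  ring

lemma sum_ne_and {V : Type*} [Fintype V] [DecidableEq V] (w : V) (C : V → Prop)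
    [DecidablePred C] (hCw : C w) (g : V → ℝ) :
    ∑ z : V, (if w ≠ z ∧ C z then g z else 0) = (∑ z : V, if C z then g z else 0) - g w := by
  have h : ∀ z, (if w ≠ z ∧ C z then g z else 0)
      = (if C z then g z else 0) - (if z = w then g w else 0) := by
    intro z
    by_cases hz : z = w
    · subst hz; simp [hCw]
    · have hwz : w ≠ z := fun h' => hz h'.symm
      by_cases hc : C z <;> simp [hz, hc, hwz]
  rw [Finset.sum_congr rfl fun z _ => h z, Finset.sum_sub_distrib,
    Finset.sum_ite_eq' Finset.univ w (fun _ => g w)]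
  simp

lemma univAdj_mulVec_apply {V : Type*} [Fintype V] [DecidableEq V] (G : SimpleGraph V)
    [DecidableRel G.Adj] (α β γ η : ℝ) (x : V → ℝ) (u : V) :
    (univAdj G α β γ η).mulVec x u
      = α * (∑ v : V, if G.Adj u v then x v else 0)
        + β * (∑ v : V, if G.Adj u v then (1:ℝ) else 0) * x u
        + γ * x u + η * ∑ v : V, x v := by
  have hU : univAdj G α β γ η
      = α • G.adjMatrix ℝ + β • Matrix.diagonal (fun v => (G.degree v : ℝ))
        + γ • (1 : Matrix V V ℝ) + η • Matrix.of (fun _ _ => (1 : ℝ)) := by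
    unfold univAdj
    congr!
  have hdeg : ∀ w : V, ((G.degree w : ℝ)) = ∑ v : V, if G.Adj w v then (1:ℝ) else 0 := by
    intro w
    rw [Finset.sum_boole, SimpleGraph.degree, SimpleGraph.neighborFinset_eq_filter]
  have hentry : ∀ v, univAdj G α β γ η u v * x v
      = α * (if G.Adj u v then x v else 0)
        + β * ((if v = u then (∑ w : V, if G.Adj u w then (1:ℝ) else 0) * x u else 0))
        + γ * (if v = u then x u else 0) + η * x v := by
    intro v
    rw [hU]
    simp only [Matrix.add_apply, Matrix.smul_apply, SimpleGraph.adjMatrix_apply,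
      Matrix.diagonal_apply, Matrix.one_apply, Matrix.of_apply, smul_eq_mul]
    by_cases h : v = u
    · subst h
      simp only [if_pos rfl, hdeg]
      by_cases ha : G.Adj v v <;>
        simp [ha, SimpleGraph.degree, SimpleGraph.neighborFinset_eq_filter] <;> ring
    · have h' : u ≠ v := fun h'' => h h''.symm
      simp only [if_neg h, if_neg h']
      by_cases ha : G.Adj u v <;> simp [ha] <;> ring
  rw [Matrix.mulVec, dotProduct, Finset.sum_congr rfl fun v _ => hentry v]
  rw [Finset.sum_add_distrib, Finset.sum_add_distrib, Finset.sum_add_distrib]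
  simp only [← Finset.mul_sum]
  rw [Finset.sum_ite_eq' Finset.univ u (fun _ => (∑ w : V, if G.Adj u w then (1:ℝ) else 0) * x u),
    Finset.sum_ite_eq' Finset.univ u (fun _ => x u)]
  simp only [Finset.mem_univ, if_true]
  ring

/-- Divisibility-shape condition on pairs. -/
def cond2 {K L : Type*} [Zero K] [Zero L] (w z : K × L) : Prop :=
  ((z.1 = 0 → w.1 = 0) ∧ (z.2 = 0 → w.2 = 0)) ∨ ((w.1 = 0 → z.1 = 0) ∧ (w.2 = 0 → z.2 = 0))

instance {K L : Type*} [Zero K] [Zero L] [DecidableEq K] [DecidableEq L] (w : K × L) :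
    DecidablePred (cond2 w) := fun z => by unfold cond2; infer_instance

set_option maxHeartbeats 1000000 in
lemma key_eigen (p q : ℕ) (hp : p.Prime) (hq : q.Prime) (hpq : p ≠ q) (α β γ η : ℝ)
    (hη : η ≠ 0) (hαη : α + η = 0) (lam : ℝ)
    (h2 : (lam - (β * ((p:ℝ) * q - p) + γ + η)) * (lam - (β * ((p:ℝ) * q - q) + γ + η))
        = η ^ 2 * ((p:ℝ) - 1) * ((q:ℝ) - 1)) :
    haveI : NeZero (p * q) := ⟨Nat.mul_ne_zero hp.ne_zero hq.ne_zero⟩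
    Module.End.HasEigenvalue
      (Matrix.toLin' (univAdj (addPowerGraph (ZMod (p * q))) α β γ η)) lam := by
  haveI : NeZero (p * q) := ⟨Nat.mul_ne_zero hp.ne_zero hq.ne_zero⟩
  haveI := Fact.mk hp
  haveI := Fact.mk hq
  classical
  have hq1 : (1:ℝ) < q := by exact_mod_cast hq.one_lt
  have hp1 : (1:ℝ) < p := by exact_mod_cast hp.one_lt
  set A : ℝ := η * ((q:ℝ) - 1) with hA
  set B : ℝ := lam - (β * ((p:ℝ) * q - q) + γ + η) with hB
  set e := ZMod.chineseRemainder ((Nat.coprime_primes hp hq).mpr hpq) with he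
  set f : ZMod p × ZMod q → ℝ := fun z =>
    if z.1 = 0 then (if z.2 = 0 then 0 else B) else (if z.2 = 0 then A else 0) with hf
  set x : ZMod (p * q) → ℝ := fun u => f (e u) with hx
  have hdvd : ∀ u v : ZMod (p * q), (∃ m : ℤ, u = m • v) ↔ v ∣ u := by
    intro u v
    constructor
    · rintro ⟨m, rfl⟩
      exact ⟨(m : ZMod (p * q)), by rw [zsmul_eq_mul]; ring⟩
    · rintro ⟨c, rfl⟩
      refine ⟨(c.val : ℤ), ?_⟩
      rw [zsmul_eq_mul]
      push_cast
      rw [ZMod.natCast_val, ZMod.cast_id]; ring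
  have hadj : ∀ u v : ZMod (p * q),
      (addPowerGraph (ZMod (p * q))).Adj u v ↔ (e u ≠ e v ∧ cond2 (e u) (e v)) := by
    intro u v
    have h1 : (addPowerGraph (ZMod (p * q))).Adj u v ↔ u ≠ v ∧ (v ∣ u ∨ u ∣ v) := by
      show (u ≠ v ∧ ∃ m : ℤ, u = m • v ∨ v = m • u) ↔ _
      rw [and_congr_right_iff]
      intro _
      rw [exists_or]
      exact or_congr (hdvd u v) (hdvd v u)
    rw [h1]
    have hne : u ≠ v ↔ e u ≠ e v := by
      constructor
      · intro h h'; exact h (e.injective h')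
      · intro h h'; exact h (by rw [h'])
    have hd : ∀ a b : ZMod (p * q),
        a ∣ b ↔ (((e a).1 = 0 → (e b).1 = 0) ∧ ((e a).2 = 0 → (e b).2 = 0)) := by
      intro a b
      have h3 : a ∣ b ↔ e a ∣ e b := by
        constructor
        · exact fun h => map_dvd e h
        · intro h
          have h4 := map_dvd e.symm h
          simpa using h4
      rw [h3, prod_dvd_iff, field_dvd_iff, field_dvd_iff]
    rw [hne, hd, hd]
    unfold cond2
    exact Iff.rfl
  have hcondrefl : ∀ w : ZMod p × ZMod q, cond2 w w := fun w => Or.inl ⟨id, id⟩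
  have hcp : (Fintype.card (ZMod p) : ℝ) = p := by rw [ZMod.card]
  have hcq : (Fintype.card (ZMod q) : ℝ) = q := by rw [ZMod.card]
  have hα : α = -η := by linarith
  apply Module.End.hasEigenvalue_of_hasEigenvector (x := x)
  constructor
  · rw [Module.End.mem_eigenspace_iff, Matrix.toLin'_apply]
    funext u
    rw [univAdj_mulVec_apply]
    have key1 : (∑ v, if (addPowerGraph (ZMod (p * q))).Adj u v then x v else 0)
        = (∑ z : ZMod p × ZMod q, if cond2 (e u) z then f z else 0) - f (e u) := by
      rw [Finset.sum_congr rfl (fun v _ => if_congr (hadj u v) rfl rfl)]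
      have hb := Fintype.sum_bijective e.toEquiv e.toEquiv.bijective
        (fun v : ZMod (p * q) => if e u ≠ e v ∧ cond2 (e u) (e v) then x v else 0)
        (fun z => if e u ≠ z ∧ cond2 (e u) z then f z else 0) (fun v => rfl)
      rw [hb, sum_ne_and (e u) (cond2 (e u)) (hcondrefl (e u)) f]
    have key2 : (∑ v, if (addPowerGraph (ZMod (p * q))).Adj u v then (1:ℝ) else 0)
        = (∑ z : ZMod p × ZMod q, if cond2 (e u) z then (1:ℝ) else 0) - 1 := by
      rw [Finset.sum_congr rfl (fun v _ => if_congr (hadj u v) rfl rfl)]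
      have hb := Fintype.sum_bijective e.toEquiv e.toEquiv.bijective
        (fun v : ZMod (p * q) => if e u ≠ e v ∧ cond2 (e u) (e v) then (1:ℝ) else 0)
        (fun z => if e u ≠ z ∧ cond2 (e u) z then (1:ℝ) else 0) (fun v => rfl)
      rw [hb, sum_ne_and (e u) (cond2 (e u)) (hcondrefl (e u)) (fun _ => (1:ℝ))]
    have key3 : (∑ v, x v) = ∑ z : ZMod p × ZMod q, f z := by
      exact Fintype.sum_bijective e.toEquiv e.toEquiv.bijective x f (fun v => rfl)
    have hS : (∑ z : ZMod p × ZMod q, f z) = ((q:ℝ) - 1) * B + ((p:ℝ) - 1) * A := by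
      simp only [hf]
      rw [sum_region, hcp, hcq]
      ring
    rw [key1, key2, key3, hS, Pi.smul_apply, smul_eq_mul]
    have hxu : x u = f (e u) := rfl
    rw [hxu]
    rcases eq_or_ne (e u).1 0 with w1 | w1 <;> rcases eq_or_ne (e u).2 0 with w2 | w2
    · -- zero
      have hC1 : (∑ z : ZMod p × ZMod q, if cond2 (e u) z then f z else 0)
          = ((q:ℝ) - 1) * B + ((p:ℝ) - 1) * A := by
        have hco : ∀ z : ZMod p × ZMod q, cond2 (e u) z := by
          intro z; unfold cond2; exact Or.inl ⟨fun _ => w1, fun _ => w2⟩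
        rw [Finset.sum_congr rfl (fun z _ => if_pos (hco z)), hS]
      have hfw : f (e u) = 0 := by simp [hf, w1, w2]
      rw [hC1, hfw, hα]; ring
    · -- Q class
      have hC1 : (∑ z : ZMod p × ZMod q, if cond2 (e u) z then f z else 0)
          = ((q:ℝ) - 1) * B := by
        have hpt : ∀ z : ZMod p × ZMod q, (if cond2 (e u) z then f z else 0)
            = (if z.1 = 0 then if z.2 = 0 then 0 else B else if z.2 = 0 then 0 else 0) := by
          intro z
          rcases eq_or_ne z.1 0 with h1 | h1 <;> rcases eq_or_ne z.2 0 with h2' | h2' <;>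
            simp [cond2, hf, h1, h2', w1, w2]
        rw [Finset.sum_congr rfl (fun z _ => hpt z), sum_region, hcp, hcq]
        ring
      have hC2 : (∑ z : ZMod p × ZMod q, if cond2 (e u) z then (1:ℝ) else 0)
          = 1 + ((q:ℝ) - 1) + ((p:ℝ) - 1) * ((q:ℝ) - 1) := by
        have hpt : ∀ z : ZMod p × ZMod q, (if cond2 (e u) z then (1:ℝ) else 0)
            = (if z.1 = 0 then if z.2 = 0 then 1 else 1 else if z.2 = 0 then 0 else 1) := by
          intro z
          rcases eq_or_ne z.1 0 with h1 | h1 <;> rcases eq_or_ne z.2 0 with h2' | h2' <;>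
            simp [cond2, h1, h2', w1, w2]
        rw [Finset.sum_congr rfl (fun z _ => hpt z), sum_region, hcp, hcq]
        ring
      have hfw : f (e u) = B := by simp [hf, w1, w2]
      rw [hC1, hC2, hfw, hα, hA]
      linear_combination -h2
    · -- P class
      have hC1 : (∑ z : ZMod p × ZMod q, if cond2 (e u) z then f z else 0)
          = ((p:ℝ) - 1) * A := by
        have hpt : ∀ z : ZMod p × ZMod q, (if cond2 (e u) z then f z else 0)
            = (if z.1 = 0 then if z.2 = 0 then 0 else 0 else if z.2 = 0 then A else 0) := by
          intro z
          rcases eq_or_ne z.1 0 with h1 | h1 <;> rcases eq_or_ne z.2 0 with h2' | h2' <;>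
            simp [cond2, hf, h1, h2', w1, w2]
        rw [Finset.sum_congr rfl (fun z _ => hpt z), sum_region, hcp, hcq]
        ring
      have hC2 : (∑ z : ZMod p × ZMod q, if cond2 (e u) z then (1:ℝ) else 0)
          = 1 + ((p:ℝ) - 1) + ((p:ℝ) - 1) * ((q:ℝ) - 1) := by
        have hpt : ∀ z : ZMod p × ZMod q, (if cond2 (e u) z then (1:ℝ) else 0)
            = (if z.1 = 0 then if z.2 = 0 then 1 else 0 else if z.2 = 0 then 1 else 1) := by
          intro z
          rcases eq_or_ne z.1 0 with h1 | h1 <;> rcases eq_or_ne z.2 0 with h2' | h2' <;>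
            simp [cond2, h1, h2', w1, w2]
        rw [Finset.sum_congr rfl (fun z _ => hpt z), sum_region, hcp, hcq]
        ring
      have hfw : f (e u) = A := by simp [hf, w1, w2]
      rw [hC1, hC2, hfw, hα, hA, hB]
      ring
    · -- unit
      have hC1 : (∑ z : ZMod p × ZMod q, if cond2 (e u) z then f z else 0)
          = ((q:ℝ) - 1) * B + ((p:ℝ) - 1) * A := by
        have hco : ∀ z : ZMod p × ZMod q, cond2 (e u) z := by
          intro z; unfold cond2; exact Or.inr ⟨fun h => absurd h w1, fun h => absurd h w2⟩
        rw [Finset.sum_congr rfl (fun z _ => if_pos (hco z)), hS]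
      have hfw : f (e u) = 0 := by simp [hf, w1, w2]
      rw [hC1, hfw, hα]; ring
  · -- x ≠ 0
    intro hx0
    have hv : x (e.symm (1, 0)) = A := by
      simp only [hx, hf]
      rw [RingEquiv.apply_symm_apply]
      simp
    rw [hx0] at hv
    have hA0 : A ≠ 0 := by
      rw [hA]
      exact mul_ne_zero hη (by linarith)
    exact hA0 (by simpa using hv.symm)

end Aux

/-- For distinct primes `p, q` and reals `α, β, γ, η` with `η ≠ 0` and
`α + η = 0`, the numbers `β(pq-1) + γ + η` and
`(β(2pq-p-q) + 2(η+γ) ± √(β²(p-q)² + 4η²(p-1)(q-1)))/2` are eigenvalues of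
`U(P(ℤ_{pq}))`. -/
theorem univAdj_powerGraph_zmod_pq_eigenvalues (p q : ℕ) (hp : p.Prime) (hq : q.Prime)
    (hpq : p ≠ q) (α β γ η : ℝ) (hη : η ≠ 0) (hαη : α + η = 0) :
    haveI : NeZero (p * q) := ⟨Nat.mul_ne_zero hp.ne_zero hq.ne_zero⟩
    Module.End.HasEigenvalue
        (Matrix.toLin' (univAdj (addPowerGraph (ZMod (p * q))) α β γ η))
        (β * ((p : ℝ) * q - 1) + γ + η) ∧
      Module.End.HasEigenvalue
        (Matrix.toLin' (univAdj (addPowerGraph (ZMod (p * q))) α β γ η))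
        ((β * (2 * (p : ℝ) * q - p - q) + 2 * (η + γ)
          + Real.sqrt (β ^ 2 * ((p : ℝ) - q) ^ 2
              + 4 * η ^ 2 * ((p : ℝ) - 1) * ((q : ℝ) - 1))) / 2) ∧
      Module.End.HasEigenvalue
        (Matrix.toLin' (univAdj (addPowerGraph (ZMod (p * q))) α β γ η))
        ((β * (2 * (p : ℝ) * q - p - q) + 2 * (η + γ)
          - Real.sqrt (β ^ 2 * ((p : ℝ) - q) ^ 2
              + 4 * η ^ 2 * ((p : ℝ) - 1) * ((q : ℝ) - 1))) / 2) := by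
  haveI : NeZero (p * q) := ⟨Nat.mul_ne_zero hp.ne_zero hq.ne_zero⟩
  haveI := Fact.mk hp
  haveI := Fact.mk hq
  classical
  have hq1 : (1:ℝ) < q := by exact_mod_cast hq.one_lt
  have hp1 : (1:ℝ) < p := by exact_mod_cast hp.one_lt
  have hΔ : 0 ≤ β ^ 2 * ((p : ℝ) - q) ^ 2 + 4 * η ^ 2 * ((p : ℝ) - 1) * ((q : ℝ) - 1) := by
    have h1 : (0:ℝ) ≤ β ^ 2 * ((p : ℝ) - q) ^ 2 := by positivity
    have h2 : (0:ℝ) ≤ 4 * η ^ 2 * ((p : ℝ) - 1) * ((q : ℝ) - 1) := by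
      have e1 : (0:ℝ) ≤ (p : ℝ) - 1 := by linarith
      have e2 : (0:ℝ) ≤ (q : ℝ) - 1 := by linarith
      have e3 : (0:ℝ) ≤ 4 * η ^ 2 := by positivity
      exact mul_nonneg (mul_nonneg e3 e1) e2
    linarith
  have hs : (Real.sqrt (β ^ 2 * ((p : ℝ) - q) ^ 2
      + 4 * η ^ 2 * ((p : ℝ) - 1) * ((q : ℝ) - 1))) ^ 2
      = β ^ 2 * ((p : ℝ) - q) ^ 2 + 4 * η ^ 2 * ((p : ℝ) - 1) * ((q : ℝ) - 1) :=
    Real.sq_sqrt hΔ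
  refine ⟨?_, ?_, ?_⟩
  · -- first eigenvalue, eigenvector = indicator of 0
    set x : ZMod (p * q) → ℝ := fun u => if u = 0 then (1:ℝ) else 0 with hxdef
    have hadj0 : ∀ u : ZMod (p * q), (addPowerGraph (ZMod (p * q))).Adj u 0 ↔ u ≠ 0 := by
      intro u
      constructor
      · exact fun h => h.1
      · exact fun h => ⟨h, 0, Or.inr (zero_smul ℤ u).symm⟩
    have hadj0' : ∀ v : ZMod (p * q), (addPowerGraph (ZMod (p * q))).Adj 0 v ↔ ¬(v = 0) := by
      intro v
      constructor
      · exact fun h hv => h.1 hv.symm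
      · intro h
        exact ((hadj0 v).mpr h).symm
    apply Module.End.hasEigenvalue_of_hasEigenvector (x := x)
    constructor
    · rw [Module.End.mem_eigenspace_iff, Matrix.toLin'_apply]
      funext u
      rw [univAdj_mulVec_apply]
      have key3 : (∑ v, x v) = 1 := by
        simp only [hxdef]
        rw [Finset.sum_ite_eq' Finset.univ (0 : ZMod (p * q)) (fun _ => (1:ℝ))]
        simp
      have key1 : (∑ v, if (addPowerGraph (ZMod (p * q))).Adj u v then x v else 0)
          = if (addPowerGraph (ZMod (p * q))).Adj u 0 then (1:ℝ) else 0 := by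
        have hpt : ∀ v : ZMod (p * q),
            (if (addPowerGraph (ZMod (p * q))).Adj u v then x v else 0)
            = (if v = 0 then (if (addPowerGraph (ZMod (p * q))).Adj u 0 then (1:ℝ) else 0)
                else 0) := by
          intro v
          by_cases hv : v = 0
          · subst hv; simp [hxdef]
          · simp [hxdef, hv]
        rw [Finset.sum_congr rfl (fun v _ => hpt v),
          Finset.sum_ite_eq' Finset.univ (0 : ZMod (p * q))]
        simp
      rw [key1, key3, Pi.smul_apply, smul_eq_mul]
      by_cases hu : u = 0
      · subst hu
        have hxu : x 0 = 1 := by simp [hxdef]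
        have key2 : (∑ v, if (addPowerGraph (ZMod (p * q))).Adj 0 v then (1:ℝ) else 0)
            = (p : ℝ) * q - 1 := by
          have hpt : ∀ v : ZMod (p * q),
              (if (addPowerGraph (ZMod (p * q))).Adj 0 v then (1:ℝ) else 0)
              = 1 - (if v = 0 then (1:ℝ) else 0) := by
            intro v
            by_cases hv : v = 0 <;> simp [hadj0', hv]
          rw [Finset.sum_congr rfl (fun v _ => hpt v), Finset.sum_sub_distrib,
            Finset.sum_ite_eq' Finset.univ (0 : ZMod (p * q)) (fun _ => (1:ℝ))]
          simp only [Finset.card_univ, ZMod.card, Finset.mem_univ, if_true, Finset.sum_const,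
            nsmul_eq_mul, mul_one]
          push_cast
          ring
        rw [key2, hxu]
        have : ¬ (addPowerGraph (ZMod (p * q))).Adj 0 0 := (addPowerGraph _).loopless.irrefl 0
        rw [if_neg this]
        ring
      · have hxu : x u = 0 := by simp [hxdef, hu]
        rw [hxu, if_pos ((hadj0 u).mpr hu)]
        have hα : α = -η := by linarith
        rw [hα]; ring
    · intro hx0
      have h1 : x 0 = 1 := by simp [hxdef]
      rw [hx0] at h1
      simpa using h1
  · exact key_eigen p q hp hq hpq α β γ η hη hαη _ (by linear_combination hs / 4)
  · exact key_eigen p q hp hq hpq α β γ η hη hαη _ (by linear_combination hs / 4)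
end

section
/- Let p and q be distinct primes and fix real numbers α ≠ 0, β, γ, and η = 0. Set λ± = ( β(p + q − 2) + 2γ ± √( (β(p − q))² + 4α²(p − 1)(q − 1) ) ) / 2. Then the characteristic polynomial of the universal adjacency matrix U(co-P(Z_{pq})) of the complement of the power graph of Z_{pq} equals (X − γ)^{φ(pq)+1} · (X − (β(q − 1) + γ))^{p−2} · (X − (β(p − 1) + γ))^{q−2} · (X − λ₊)(X − λ₋); that is, its eigenvalues are γ with multiplicity φ(pq) + 1, β(q − 1) + γ with multiplicity p − 2, β(p − 1) + γ with multiplicity q − 2, and the two simple eigenvalues λ₊ and λ₋. -/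
open Matrix Polynomial Finset

lemma zmod_dvd_iff {n : ℕ} [NeZero n] (u v : ZMod n) :
    (∃ m : ℤ, u = m • v) ↔ addOrderOf u ∣ addOrderOf v := by
  constructor
  · rintro ⟨m, rfl⟩
    exact addOrderOf_dvd_of_mem_zmultiples (AddSubgroup.mem_zmultiples_iff.mpr ⟨m, rfl⟩)
  · intro h
    set d := addOrderOf v with hd
    have hdn : d ∣ n := by simpa [ZMod.card] using addOrderOf_dvd_card (x := v)
    have hd0 : 0 < d := addOrderOf_pos v
    have key : ∀ w : ZMod n, addOrderOf w ∣ d →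
        w ∈ AddSubgroup.zmultiples ((n / d : ℕ) : ZMod n) := by
      intro w hw
      have h1 : ((d * w.val : ℕ) : ZMod n) = 0 := by
        have h0 : d • w = 0 := addOrderOf_dvd_iff_nsmul_eq_zero.mp hw
        rw [nsmul_eq_mul] at h0
        push_cast
        rwa [ZMod.natCast_zmod_val]
      have h2 : n ∣ d * w.val := (ZMod.natCast_eq_zero_iff _ _).mp h1
      have h3 : n / d ∣ w.val := by
        refine Nat.dvd_of_mul_dvd_mul_left hd0 ?_
        rw [Nat.mul_div_cancel' hdn]
        exact h2
      obtain ⟨k, hk⟩ := h3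
      refine AddSubgroup.mem_zmultiples_iff.mpr ⟨(k : ℤ), ?_⟩
      have hw' : ((n / d * k : ℕ) : ZMod n) = w := by rw [← hk, ZMod.natCast_zmod_val]
      rw [← hw', natCast_zsmul, nsmul_eq_mul]
      push_cast
      ring
    have hvS : v ∈ AddSubgroup.zmultiples ((n / d : ℕ) : ZMod n) := key v dvd_rfl
    have hle : AddSubgroup.zmultiples v ≤ AddSubgroup.zmultiples ((n / d : ℕ) : ZMod n) :=
      AddSubgroup.zmultiples_le.mpr hvS
    have hcard' : Nat.card (AddSubgroup.zmultiples ((n / d : ℕ) : ZMod n)) = d := by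
      rw [Nat.card_zmultiples, ZMod.addOrderOf_coe _ (NeZero.ne n),
        Nat.gcd_eq_right (Nat.div_dvd_of_dvd hdn), Nat.div_div_self hdn (NeZero.ne n)]
    have hcardv : Nat.card (AddSubgroup.zmultiples v) = d := Nat.card_zmultiples v
    have hset : (AddSubgroup.zmultiples v : Set (ZMod n)) =
        (AddSubgroup.zmultiples ((n / d : ℕ) : ZMod n) : Set (ZMod n)) := by
      apply Set.eq_of_subset_of_ncard_le hle
      rw [← Nat.card_coe_set_eq, ← Nat.card_coe_set_eq]
      simp only [SetLike.coe_sort_coe]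
      rw [hcard', hcardv]
    have hu : u ∈ AddSubgroup.zmultiples v := by
      rw [← SetLike.mem_coe, hset]
      exact key u h
    obtain ⟨m, hm⟩ := AddSubgroup.mem_zmultiples_iff.mp hu
    exact ⟨m, hm.symm⟩

section PQ
variable {p q : ℕ}

lemma order_classify (hp : p.Prime) (hq : q.Prime) [NeZero (p * q)] (v : ZMod (p * q)) :
    addOrderOf v = 1 ∨ addOrderOf v = p ∨ addOrderOf v = q ∨ addOrderOf v = p * q := by
  have hdvd : addOrderOf v ∣ p * q := by simpa [ZMod.card] using addOrderOf_dvd_card (x := v)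
  rcases Nat.coprime_or_dvd_of_prime hp (addOrderOf v) with hco | hpd
  · have hq' : addOrderOf v ∣ q := (Nat.Coprime.symm hco).dvd_of_dvd_mul_left hdvd
    rcases (Nat.Prime.eq_one_or_self_of_dvd hq _ hq') with h | h
    · exact Or.inl h
    · exact Or.inr (Or.inr (Or.inl h))
  · obtain ⟨e, he⟩ := hpd
    have he' : e ∣ q := by
      refine Nat.dvd_of_mul_dvd_mul_left hp.pos ?_
      rw [← he]; exact hdvd
    rcases (Nat.Prime.eq_one_or_self_of_dvd hq _ he') with h | h
    · exact Or.inr (Or.inl (by rw [he, h, mul_one]))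
    · exact Or.inr (Or.inr (Or.inr (by rw [he, h])))

lemma compl_adj_iff (hp : p.Prime) (hq : q.Prime) (hpq : p ≠ q) [NeZero (p * q)]
    (u v : ZMod (p * q)) :
    (addPowerGraph (ZMod (p * q)))ᶜ.Adj u v ↔
      ((addOrderOf u = p ∧ addOrderOf v = q) ∨ (addOrderOf u = q ∧ addOrderOf v = p)) := by
  have hnpq : ¬ p ∣ q := fun h => hpq ((Nat.prime_dvd_prime_iff_eq hp hq).mp h)
  have hnqp : ¬ q ∣ p := fun h => hpq ((Nat.prime_dvd_prime_iff_eq hq hp).mp h).symm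
  rw [SimpleGraph.compl_adj]
  constructor
  · rintro ⟨hne, hnadj⟩
    have hnm : ¬ (∃ m : ℤ, u = m • v ∨ v = m • u) := fun ⟨m, hm⟩ => hnadj ⟨hne, m, hm⟩
    have h1 : ¬ addOrderOf u ∣ addOrderOf v := by
      intro h
      obtain ⟨m, hm⟩ := (zmod_dvd_iff u v).mpr h
      exact hnm ⟨m, Or.inl hm⟩
    have h2 : ¬ addOrderOf v ∣ addOrderOf u := by
      intro h
      obtain ⟨m, hm⟩ := (zmod_dvd_iff v u).mpr h
      exact hnm ⟨m, Or.inr hm⟩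
    have hun : addOrderOf u ∣ p * q := by simpa [ZMod.card] using addOrderOf_dvd_card (x := u)
    have hvn : addOrderOf v ∣ p * q := by simpa [ZMod.card] using addOrderOf_dvd_card (x := v)
    rcases order_classify hp hq v with hv | hv | hv | hv
    · exact absurd (by rw [hv]; exact one_dvd _) h2
    · rcases order_classify hp hq u with hu | hu | hu | hu
      · exact absurd (by rw [hu]; exact one_dvd _) h1
      · exact absurd (by rw [hu, hv]) h1
      · exact Or.inr ⟨hu, hv⟩
      · exact absurd (by rw [hu]; exact hvn) h2
    · rcases order_classify hp hq u with hu | hu | hu | hu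
      · exact absurd (by rw [hu]; exact one_dvd _) h1
      · exact Or.inl ⟨hu, hv⟩
      · exact absurd (by rw [hu, hv]) h1
      · exact absurd (by rw [hu]; exact hvn) h2
    · exact absurd (by rw [hv]; exact hun) h1
  · rintro (⟨hu, hv⟩ | ⟨hu, hv⟩)
    · refine ⟨fun h => hpq (by rw [← hu, h, hv]), ?_⟩
      rintro ⟨-, m, hm | hm⟩
      · have := (zmod_dvd_iff u v).mp ⟨m, hm⟩
        rw [hu, hv] at this; exact hnpq this
      · have := (zmod_dvd_iff v u).mp ⟨m, hm⟩
        rw [hu, hv] at this; exact hnqp this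
    · refine ⟨fun h => hpq (by rw [← hv, ← h, hu]), ?_⟩
      rintro ⟨-, m, hm | hm⟩
      · have := (zmod_dvd_iff u v).mp ⟨m, hm⟩
        rw [hu, hv] at this; exact hnqp this
      · have := (zmod_dvd_iff v u).mp ⟨m, hm⟩
        rw [hu, hv] at this; exact hnpq this

lemma card_order_eq [NeZero (p * q)] {d : ℕ} (hd : d ∣ p * q) :
    (Finset.univ.filter (fun v : ZMod (p * q) => addOrderOf v = d)).card = Nat.totient d := by
  have := IsAddCyclic.card_addOrderOf_eq_totient (α := ZMod (p * q))
    (d := d) (by simpa [ZMod.card] using hd)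
  convert this using 2

lemma degree_eq_filter {V : Type*} [Fintype V] [DecidableEq V] (G : SimpleGraph V)
    [DecidableRel G.Adj] (v : V) [Fintype (G.neighborSet v)] :
    G.degree v = (Finset.univ.filter (G.Adj v)).card := by
  rw [← SimpleGraph.card_neighborSet_eq_degree, Fintype.card_eq_nat_card,
    Nat.card_coe_set_eq, Set.ncard_eq_toFinset_card']
  congr 1
  ext u
  simp [SimpleGraph.neighborSet]
  exact @Set.mem_toFinset _ {w | G.Adj v w} (‹Fintype (G.neighborSet v)›) u

lemma degree_val (hp : p.Prime) (hq : q.Prime) (hpq : p ≠ q) [NeZero (p * q)]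
    (v : ZMod (p * q)) {instF : Fintype ((addPowerGraph (ZMod (p * q)))ᶜ.neighborSet v)} :
    @SimpleGraph.degree _ (addPowerGraph (ZMod (p * q)))ᶜ v instF =
      if addOrderOf v = p then q - 1 else if addOrderOf v = q then p - 1 else 0 := by
  haveI := instF
  classical
  rw [degree_eq_filter]
  by_cases h1 : addOrderOf v = p
  · have h2 : addOrderOf v ≠ q := by rw [h1]; exact hpq
    rw [if_pos h1]
    have hf : Finset.univ.filter ((addPowerGraph (ZMod (p * q)))ᶜ.Adj v)
        = Finset.univ.filter (fun u : ZMod (p * q) => addOrderOf u = q) := by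
      ext u
      simp only [Finset.mem_filter, Finset.mem_univ, true_and, compl_adj_iff hp hq hpq, h1, h2]
      tauto
    rw [hf, card_order_eq (dvd_mul_left q p), Nat.totient_prime hq]
  · rw [if_neg h1]
    by_cases h2 : addOrderOf v = q
    · rw [if_pos h2]
      have hf : Finset.univ.filter ((addPowerGraph (ZMod (p * q)))ᶜ.Adj v)
          = Finset.univ.filter (fun u : ZMod (p * q) => addOrderOf u = p) := by
        ext u
        simp only [Finset.mem_filter, Finset.mem_univ, true_and, compl_adj_iff hp hq hpq, h1, h2]
        tauto
      rw [hf, card_order_eq (dvd_mul_right p q), Nat.totient_prime hp]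
    · rw [if_neg h2]
      have hf : Finset.univ.filter ((addPowerGraph (ZMod (p * q)))ᶜ.Adj v) = ∅ := by
        ext u
        simp [compl_adj_iff hp hq hpq, h1, h2]
      rw [hf]
      simp

end PQ

/-- For distinct primes `p, q` and reals `α ≠ 0`, `β`, `γ` (and `η = 0`),
the characteristic polynomial of `U(co-P(ℤ_{pq}))` is
`(X - γ)^{φ(pq)+1} (X - (β(q-1)+γ))^{p-2} (X - (β(p-1)+γ))^{q-2} (X - λ₊)(X - λ₋)`,
where `λ± = (β(p+q-2) + 2γ ± √((β(p-q))² + 4α²(p-1)(q-1)))/2`. -/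
theorem charpoly_univAdj_compl_powerGraph_zmod_pq (p q : ℕ) (hp : p.Prime)
    (hq : q.Prime) (hpq : p ≠ q) (α β γ : ℝ) (hα : α ≠ 0) :
    haveI : NeZero (p * q) := ⟨Nat.mul_ne_zero hp.ne_zero hq.ne_zero⟩
    Matrix.charpoly (univAdj (addPowerGraph (ZMod (p * q)))ᶜ α β γ 0) =
      (X - C γ) ^ (Nat.totient (p * q) + 1)
        * (X - C (β * ((q : ℝ) - 1) + γ)) ^ (p - 2)
        * (X - C (β * ((p : ℝ) - 1) + γ)) ^ (q - 2)
        * (X - C ((β * ((p : ℝ) + q - 2) + 2 * γ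
            + Real.sqrt ((β * ((p : ℝ) - q)) ^ 2
                + 4 * α ^ 2 * ((p : ℝ) - 1) * ((q : ℝ) - 1))) / 2))
        * (X - C ((β * ((p : ℝ) + q - 2) + 2 * γ
            - Real.sqrt ((β * ((p : ℝ) - q)) ^ 2
                + 4 * α ^ 2 * ((p : ℝ) - 1) * ((q : ℝ) - 1))) / 2)) := by
  haveI : NeZero (p * q) := ⟨Nat.mul_ne_zero hp.ne_zero hq.ne_zero⟩
  classical
  have hp2 := hp.two_le
  have hq2 := hq.two_le
  have hp1R : (1 : ℝ) ≤ (p : ℝ) := by exact_mod_cast hp.one_lt.le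
  have hq1R : (1 : ℝ) ≤ (q : ℝ) := by exact_mod_cast hq.one_lt.le
  have hcop : Nat.Coprime p q := (Nat.coprime_primes hp hq).mpr hpq
  have htot : Nat.totient (p * q) = (p - 1) * (q - 1) := by
    rw [Nat.totient_mul hcop, Nat.totient_prime hp, Nat.totient_prime hq]
  set a : ℝ := β * ((q : ℝ) - 1) + γ with ha
  set b : ℝ := β * ((p : ℝ) - 1) + γ with hb
  set s : ℝ := Real.sqrt ((β * ((p : ℝ) - q)) ^ 2
      + 4 * α ^ 2 * ((p : ℝ) - 1) * ((q : ℝ) - 1)) with hs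
  set lp : ℝ := (β * ((p : ℝ) + q - 2) + 2 * γ + s) / 2 with hlp
  set lm : ℝ := (β * ((p : ℝ) + q - 2) + 2 * γ - s) / 2 with hlm
  set M := univAdj (addPowerGraph (ZMod (p * q)))ᶜ α β γ 0 with hMdef
  -- quadratic identity
  have hdisc : (0 : ℝ) ≤ (β * ((p : ℝ) - q)) ^ 2
      + 4 * α ^ 2 * ((p : ℝ) - 1) * ((q : ℝ) - 1) := by
    have h1 : (0 : ℝ) ≤ (p : ℝ) - 1 := by linarith
    have h2 : (0 : ℝ) ≤ (q : ℝ) - 1 := by linarith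
    have h3 : (0 : ℝ) ≤ 4 * α ^ 2 := by positivity
    exact add_nonneg (sq_nonneg _) (mul_nonneg (mul_nonneg h3 h1) h2)
  have hss : s * s = (β * ((p : ℝ) - q)) ^ 2
      + 4 * α ^ 2 * ((p : ℝ) - 1) * ((q : ℝ) - 1) := Real.mul_self_sqrt hdisc
  have hquad : ∀ x : ℝ, (x - a) * (x - b) - α ^ 2 * ((p : ℝ) - 1) * ((q : ℝ) - 1)
      = (x - lp) * (x - lm) := by
    intro x
    rw [ha, hb, hlp, hlm]
    linear_combination (1 / 4 : ℝ) * hss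
  -- counting
  have hcp : (Finset.univ.filter (fun v : ZMod (p * q) => addOrderOf v = p)).card = p - 1 := by
    rw [card_order_eq (dvd_mul_right p q), Nat.totient_prime hp]
  have hcq : (Finset.univ.filter (fun v : ZMod (p * q) => addOrderOf v = q)).card = q - 1 := by
    rw [card_order_eq (dvd_mul_left q p), Nat.totient_prime hq]
  -- indicator functions
  set ev : ZMod (p * q) → ℝ := fun v => if addOrderOf v = p then 1 else 0 with hev
  set fv : ZMod (p * q) → ℝ := fun v => if addOrderOf v = q then 1 else 0 with hfv
  set U : Matrix (ZMod (p * q)) (Fin 2) ℝ :=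
    Matrix.of (fun v (i : Fin 2) => ![ev v, fv v] i) with hU
  set W : Matrix (Fin 2) (ZMod (p * q)) ℝ :=
    Matrix.of (fun (i : Fin 2) v => α * ![fv v, ev v] i) with hW
  -- the determinant identity for good x
  have hdet : ∀ x : ℝ, x ≠ γ → x ≠ a → x ≠ b →
      (Matrix.diagonal (fun _ : ZMod (p * q) => x) - M).det
        = (x - γ) ^ (Nat.totient (p * q) + 1) * (x - a) ^ (p - 2) * (x - b) ^ (q - 2)
            * ((x - a) * (x - b) - α ^ 2 * ((p : ℝ) - 1) * ((q : ℝ) - 1)) := by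
    intro x hxγ hxa hxb
    have hxa' : x - a ≠ 0 := sub_ne_zero.mpr hxa
    have hxb' : x - b ≠ 0 := sub_ne_zero.mpr hxb
    have hxγ' : x - γ ≠ 0 := sub_ne_zero.mpr hxγ
    set δ : ZMod (p * q) → ℝ := fun v =>
      if addOrderOf v = p then x - a else if addOrderOf v = q then x - b else x - γ with hδ
    have hδne : ∀ v, δ v ≠ 0 := by
      intro v
      rw [hδ]
      dsimp only
      split_ifs
      exacts [hxa', hxb', hxγ']
    have hevfv : ∀ u : ZMod (p * q), ev u * fv u = 0 := by
      intro u
      rw [hev, hfv]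
      dsimp only
      split_ifs with h1 h2
      · exact absurd (h1.symm.trans h2) hpq
      · simp
      · simp
      · simp
    have hUW : ∀ u v : ZMod (p * q), (U * W) u v = α * (ev u * fv v + fv u * ev v) := by
      intro u v
      rw [Matrix.mul_apply, Fin.sum_univ_two]
      rw [hU, hW]
      simp only [Matrix.of_apply, Matrix.cons_val_zero, Matrix.cons_val_one, Matrix.head_cons]
      ring
    -- splitting of the matrix
    have hfvev : ∀ u : ZMod (p * q), fv u * ev u = 0 := fun u => by
      rw [mul_comm]; exact hevfv u
    have hadj_iff : ∀ u v : ZMod (p * q), (addPowerGraph (ZMod (p * q)))ᶜ.Adj u v ↔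
        ((addOrderOf u = p ∧ addOrderOf v = q) ∨ (addOrderOf u = q ∧ addOrderOf v = p)) :=
      compl_adj_iff hp hq hpq
    have hsplit : Matrix.diagonal (fun _ : ZMod (p * q) => x) - M = Matrix.diagonal δ - U * W := by
      ext u v
      rw [hMdef]
      simp only [univAdj, zero_smul, add_zero, Matrix.sub_apply, Matrix.add_apply,
        Matrix.smul_apply, smul_eq_mul, Matrix.diagonal_apply, Matrix.one_apply,
        SimpleGraph.adjMatrix_apply, hUW]
      by_cases huv : u = v
      · subst huv
        rw [degree_val hp hq hpq]
        simp only [if_true, eq_self_iff_true, SimpleGraph.irrefl, if_false, hevfv, hfvev,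
          mul_zero, add_zero, zero_add, mul_one]
        rw [hδ]
        dsimp only
        by_cases h1 : addOrderOf u = p
        · have h2 : addOrderOf u ≠ q := by rw [h1]; exact hpq
          rw [if_pos h1, if_pos h1, ha, Nat.cast_sub hq.one_le]
          push_cast
          ring
        · rw [if_neg h1, if_neg h1]
          by_cases h2 : addOrderOf u = q
          · rw [if_pos h2, if_pos h2, hb, Nat.cast_sub hp.one_le]
            push_cast
            ring
          · rw [if_neg h2, if_neg h2]
            push_cast
            ring
      · simp only [huv, if_false]
        by_cases hadj : (addPowerGraph (ZMod (p * q)))ᶜ.Adj u v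
        · rw [if_pos hadj]
          rw [hev, hfv]
          dsimp only
          rcases (hadj_iff u v).mp hadj with ⟨h1, h2⟩ | ⟨h1, h2⟩
          · have h1' : addOrderOf u ≠ q := by rw [h1]; exact hpq
            have h2' : addOrderOf v ≠ p := by rw [h2]; exact fun h => hpq h.symm
            rw [if_pos h1, if_pos h2, if_neg h1', if_neg h2']
            ring
          · have h1' : addOrderOf u ≠ p := by rw [h1]; exact fun h => hpq h.symm
            have h2' : addOrderOf v ≠ q := by rw [h2]; exact hpq
            rw [if_pos h1, if_pos h2, if_neg h1', if_neg h2']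
            ring
        · rw [if_neg hadj]
          have hno := (hadj_iff u v).not.mp hadj
          have hc1 : ev u * fv v = 0 := by
            by_cases h1 : addOrderOf u = p
            · by_cases h2 : addOrderOf v = q
              · exact absurd (Or.inl ⟨h1, h2⟩) hno
              · have : fv v = 0 := by rw [hfv]; exact if_neg h2
                rw [this, mul_zero]
            · have : ev u = 0 := by rw [hev]; exact if_neg h1
              rw [this, zero_mul]
          have hc2 : fv u * ev v = 0 := by
            by_cases h3 : addOrderOf u = q
            · by_cases h4 : addOrderOf v = p
              · exact absurd (Or.inr ⟨h3, h4⟩) hno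
              · have : ev v = 0 := by rw [hev]; exact if_neg h4
                rw [this, mul_zero]
            · have : fv u = 0 := by rw [hfv]; exact if_neg h3
              rw [this, zero_mul]
          rw [hc1, hc2]
          ring
    rw [hsplit]
    -- factor out the diagonal
    have hDD : Matrix.diagonal δ * Matrix.diagonal (fun v => (δ v)⁻¹) = 1 := by
      rw [Matrix.diagonal_mul_diagonal,
        show (fun v => δ v * (δ v)⁻¹) = fun _ => (1 : ℝ) from
          funext fun v => mul_inv_cancel₀ (hδne v), Matrix.diagonal_one]
    have hfact : Matrix.diagonal δ - U * W
        = Matrix.diagonal δ * (1 - (Matrix.diagonal (fun v => (δ v)⁻¹) * U) * W) := by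
      rw [Matrix.mul_sub, Matrix.mul_one, ← Matrix.mul_assoc, ← Matrix.mul_assoc, hDD,
        Matrix.one_mul]
    have hdet1 : (Matrix.diagonal δ - U * W).det
        = (∏ v, δ v) * (1 - W * (Matrix.diagonal (fun v => (δ v)⁻¹) * U)).det := by
      rw [hfact, Matrix.det_mul, Matrix.det_diagonal]
      congr 1
      rw [sub_eq_add_neg, ← Matrix.neg_mul, Matrix.det_one_add_mul_comm, Matrix.mul_neg,
        ← sub_eq_add_neg]
    -- entries of the 2x2 matrix
    set N : Matrix (Fin 2) (Fin 2) ℝ := W * (Matrix.diagonal (fun v => (δ v)⁻¹) * U) with hN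
    have hNapp : ∀ i j, N i j = ∑ v, (α * ![fv v, ev v] i) * ((δ v)⁻¹ * ![ev v, fv v] j) := by
      intro i j
      rw [hN, Matrix.mul_apply]
      refine Finset.sum_congr rfl fun v _ => ?_
      rw [Matrix.diagonal_mul, hU, hW]
      simp only [Matrix.of_apply]
    have hfv0 : ∀ v : ZMod (p * q), addOrderOf v = p → fv v = 0 := by
      intro v hv
      rw [hfv]
      exact if_neg (by rw [hv]; exact hpq)
    have hev0 : ∀ v : ZMod (p * q), addOrderOf v ≠ p → ev v = 0 := by
      intro v hv
      rw [hev]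
      exact if_neg hv
    have hN00 : N 0 0 = 0 := by
      rw [hNapp]
      refine Finset.sum_eq_zero fun v _ => ?_
      simp only [Matrix.cons_val_zero]
      by_cases hv : addOrderOf v = p
      · rw [hfv0 v hv]; ring
      · rw [hev0 v hv]; ring
    have hN11 : N 1 1 = 0 := by
      rw [hNapp]
      refine Finset.sum_eq_zero fun v _ => ?_
      simp only [Matrix.cons_val_one, Matrix.head_cons]
      by_cases hv : addOrderOf v = p
      · rw [hfv0 v hv]; simp
      · rw [hev0 v hv]; simp
    have hN01 : N 0 1 = ((q : ℝ) - 1) * (α * (x - b)⁻¹) := by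
      rw [hNapp]
      have hterm : ∀ v : ZMod (p * q), (α * ![fv v, ev v] 0) * ((δ v)⁻¹ * ![ev v, fv v] 1)
          = if addOrderOf v = q then α * (x - b)⁻¹ else 0 := by
        intro v
        simp only [Matrix.cons_val_zero, Matrix.cons_val_one, Matrix.head_cons]
        by_cases hv : addOrderOf v = q
        · have hv' : addOrderOf v ≠ p := by rw [hv]; exact fun h => hpq h.symm
          have hf1 : fv v = 1 := by rw [hfv]; exact if_pos hv
          have hδb : δ v = x - b := by
            rw [hδ]
            dsimp only
            rw [if_neg hv', if_pos hv]
          rw [if_pos hv, hf1, hδb]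
          ring
        · have hf0 : fv v = 0 := by rw [hfv]; exact if_neg hv
          rw [if_neg hv, hf0]
          ring
      rw [Finset.sum_congr rfl fun v _ => hterm v, ← Finset.sum_filter, Finset.sum_const, hcq,
        nsmul_eq_mul, Nat.cast_sub hq.one_le, Nat.cast_one]
    have hN10 : N 1 0 = ((p : ℝ) - 1) * (α * (x - a)⁻¹) := by
      rw [hNapp]
      have hterm : ∀ v : ZMod (p * q), (α * ![fv v, ev v] 1) * ((δ v)⁻¹ * ![ev v, fv v] 0)
          = if addOrderOf v = p then α * (x - a)⁻¹ else 0 := by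
        intro v
        simp only [Matrix.cons_val_zero, Matrix.cons_val_one, Matrix.head_cons]
        by_cases hv : addOrderOf v = p
        · have he1 : ev v = 1 := by rw [hev]; exact if_pos hv
          have hδa : δ v = x - a := by
            rw [hδ]
            dsimp only
            rw [if_pos hv]
          rw [if_pos hv, he1, hδa]
          ring
        · rw [if_neg hv, hev0 v hv]
          ring
      rw [Finset.sum_congr rfl fun v _ => hterm v, ← Finset.sum_filter, Finset.sum_const, hcp,
        nsmul_eq_mul, Nat.cast_sub hp.one_le, Nat.cast_one]
    have hdet2 : (1 - N).det
        = 1 - (((q : ℝ) - 1) * (α * (x - b)⁻¹)) * (((p : ℝ) - 1) * (α * (x - a)⁻¹)) := by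
      rw [Matrix.det_fin_two, Matrix.sub_apply, Matrix.sub_apply, Matrix.sub_apply,
        Matrix.sub_apply, Matrix.one_apply_eq, Matrix.one_apply_eq,
        Matrix.one_apply_ne (by norm_num : (0 : Fin 2) ≠ 1),
        Matrix.one_apply_ne (by norm_num : (1 : Fin 2) ≠ 0), hN00, hN11, hN01, hN10]
      ring
    -- the product of the diagonal
    have hkey : p * q = (p - 1) * (q - 1) + (p - 1) + (q - 1) + 1 := by
      obtain ⟨p', rfl⟩ := Nat.exists_eq_add_of_le hp.one_le
      obtain ⟨q', rfl⟩ := Nat.exists_eq_add_of_le hq.one_le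
      simp only [Nat.add_sub_cancel_left]
      ring
    have e1 : Finset.univ.filter (fun v : ZMod (p * q) =>
        ¬addOrderOf v = p ∧ addOrderOf v = q)
        = Finset.univ.filter (fun v : ZMod (p * q) => addOrderOf v = q) := by
      ext v
      simp only [Finset.mem_filter, Finset.mem_univ, true_and, and_iff_right_iff_imp]
      intro h
      rw [h]
      exact fun hh => hpq hh.symm
    have e2 : (Finset.univ.filter (fun v : ZMod (p * q) =>
        ¬addOrderOf v = p ∧ ¬addOrderOf v = q)).card = Nat.totient (p * q) + 1 := by
      have h3 := Finset.card_filter_add_card_filter_not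
        (s := (Finset.univ : Finset (ZMod (p * q))))
        (p := fun v => addOrderOf v = p ∨ addOrderOf v = q)
      have h4 : Finset.univ.filter (fun v : ZMod (p * q) =>
          addOrderOf v = p ∨ addOrderOf v = q)
          = Finset.univ.filter (fun v : ZMod (p * q) => addOrderOf v = p)
            ∪ Finset.univ.filter (fun v : ZMod (p * q) => addOrderOf v = q) :=
        Finset.filter_or _ _ _
      have h5 : Disjoint (Finset.univ.filter (fun v : ZMod (p * q) => addOrderOf v = p))
          (Finset.univ.filter (fun v : ZMod (p * q) => addOrderOf v = q)) := by
        rw [Finset.disjoint_filter]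
        intro v _ h1 h2
        exact hpq (h1.symm.trans h2)
      rw [h4, Finset.card_union_of_disjoint h5, hcp, hcq] at h3
      have h6 : Finset.univ.filter (fun v : ZMod (p * q) =>
          ¬(addOrderOf v = p ∨ addOrderOf v = q))
          = Finset.univ.filter (fun v : ZMod (p * q) =>
            ¬addOrderOf v = p ∧ ¬addOrderOf v = q) := by
        ext v
        simp [not_or]
      rw [h6] at h3
      have h7 : (Finset.univ : Finset (ZMod (p * q))).card = p * q := by
        rw [Finset.card_univ, ZMod.card]
      rw [h7] at h3
      set t := (p - 1) * (q - 1)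
      rw [htot]
      omega
    have hprod : ∏ v, δ v = (x - a) ^ (p - 1)
        * ((x - b) ^ (q - 1) * (x - γ) ^ (Nat.totient (p * q) + 1)) := by
      rw [hδ]
      rw [Finset.prod_ite]
      rw [Finset.prod_const, hcp]
      congr 1
      rw [Finset.prod_ite, Finset.prod_const, Finset.prod_const,
        Finset.filter_filter, Finset.filter_filter, e1, hcq, e2]
    -- assemble
    rw [hdet1, hdet2, hprod]
    rw [show p - 1 = (p - 2) + 1 by omega, show q - 1 = (q - 2) + 1 by omega,
      pow_succ, pow_succ]
    field_simp
  -- eval of charpoly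
  have hev1 : ∀ x : ℝ, eval x (Matrix.charpoly M)
      = (Matrix.diagonal (fun _ : ZMod (p * q) => x) - M).det := by
    intro x
    rw [Matrix.charpoly, ← Polynomial.coe_evalRingHom, RingHom.map_det]
    congr 1
    ext i j
    by_cases h : i = j <;>
      simp [Matrix.charmatrix_apply, h, Matrix.diagonal_apply, Matrix.sub_apply]
  -- conclude
  apply Polynomial.eq_of_infinite_eval_eq
  have hfin : ({γ, a, b} : Set ℝ).Finite := ((Set.finite_singleton b).insert a).insert γ
  refine Set.Infinite.mono ?_ hfin.infinite_compl
  intro x hx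
  simp only [Set.mem_compl_iff, Set.mem_insert_iff, Set.mem_singleton_iff, not_or] at hx
  obtain ⟨hx1, hx2, hx3⟩ := hx
  simp only [Set.mem_setOf_eq]
  rw [hev1 x, hdet x hx1 hx2 hx3]
  simp only [eval_mul, eval_pow, eval_sub, eval_X, eval_C]
  rw [hquad x]
  ring
end

section
/- Let n = 2^r with r ≥ 1, let Q_n be the generalized quaternion (dicyclic) group of order 4n, and fix real numbers α ≠ 0, β, γ, η. Then the vector X ∈ ℝ^{Q_n} with X_e = 1, X_{a^n} = −1 and all other coordinates 0 satisfies U(P(Q_n))·X = (−α + (4n − 1)β + γ)·X; in particular −α + (4n − 1)β + γ is an eigenvalue of U(P(Q_n)). -/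
open Matrix

/-- The (undirected) power graph of a group: distinct `u`, `v` are adjacent
iff one is an integer power of the other. -/
def powerGraph (G : Type*) [Group G] : SimpleGraph G where
  Adj u v := u ≠ v ∧ ∃ m : ℤ, u = v ^ m ∨ v = u ^ m
  symm := by
    constructor
    rintro u v ⟨huv, m, hm | hm⟩
    · exact ⟨huv.symm, m, Or.inr hm⟩
    · exact ⟨huv.symm, m, Or.inl hm⟩
  loopless := ⟨fun u h => h.1 rfl⟩

lemma a_pow {n : ℕ} (i : ZMod (2 * n)) (k : ℕ) :
    (QuaternionGroup.a i : QuaternionGroup n) ^ k = QuaternionGroup.a ((k : ZMod (2 * n)) * i) := by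
  induction k with
  | zero => simp
  | succ k ih =>
    rw [pow_succ, ih, QuaternionGroup.a_mul_a]
    push_cast
    ring_nf

lemma two_torsion {n : ℕ} [NeZero n] (x : ZMod (2 * n)) (hx : x + x = 0) :
    x = 0 ∨ x = (n : ZMod (2 * n)) := by
  haveI : NeZero (2 * n) := ⟨by have := NeZero.ne n; omega⟩
  have hval : ((2 * x.val : ℕ) : ZMod (2 * n)) = 0 := by
    push_cast [ZMod.natCast_val, ZMod.cast_id]
    linear_combination hx
  rw [ZMod.natCast_eq_zero_iff] at hval
  have hdvd : n ∣ x.val := (mul_dvd_mul_iff_left (two_ne_zero)).mp hval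
  have hlt : x.val < 2 * n := ZMod.val_lt x
  obtain ⟨k, hk⟩ := hdvd
  have hk2 : k = 0 ∨ k = 1 := by
    rcases Nat.lt_or_ge k 2 with h | h
    · omega
    · exfalso; have := NeZero.ne n; nlinarith
  rcases hk2 with h | h
  · left
    have : x.val = 0 := by subst h; simpa using hk
    rw [← ZMod.natCast_zmod_val x, this, Nat.cast_zero]
  · right
    have : x.val = n := by subst h; simpa using hk
    rw [← ZMod.natCast_zmod_val x, this]

lemma z_ne_one {n : ℕ} [NeZero n] :
    (QuaternionGroup.a (n : ZMod (2 * n)) : QuaternionGroup n) ≠ 1 := by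
  rw [QuaternionGroup.one_def]
  intro h
  have h0 : (n : ZMod (2 * n)) = 0 := QuaternionGroup.a.inj h
  rw [ZMod.natCast_eq_zero_iff] at h0
  rcases h0 with ⟨k, hk⟩
  have := NeZero.ne n
  rcases Nat.eq_zero_or_pos k with h | h
  · subst h; simp at hk; omega
  · have h2 : 2 * n ≤ 2 * n * k := Nat.le_mul_of_pos_right _ h
    omega

lemma exists_pow_eq_z (r n : ℕ) [NeZero n] (hn : n = 2 ^ r)
    (g : QuaternionGroup n) (hg : g ≠ 1) :
    ∃ m : ℕ, g ^ m = QuaternionGroup.a (n : ZMod (2 * n)) := by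
  cases g with
  | xa i => exact ⟨2, QuaternionGroup.xa_sq i⟩
  | a i =>
    have hcard : Fintype.card (QuaternionGroup n) = 2 ^ (r + 2) := by
      rw [QuaternionGroup.card, hn]; ring
    have hd : orderOf (QuaternionGroup.a i : QuaternionGroup n) ∣ 2 ^ (r + 2) := by
      rw [← hcard]; exact orderOf_dvd_card
    obtain ⟨s, hsle, hds⟩ := (Nat.dvd_prime_pow Nat.prime_two).mp hd
    have hs1 : 1 ≤ s := by
      rcases Nat.eq_zero_or_pos s with h | h
      · exfalso
        rw [h, pow_zero, orderOf_eq_one_iff] at hds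
        exact hg hds
      · exact h
    refine ⟨2 ^ (s - 1), ?_⟩
    set j : ZMod (2 * n) := ((2 ^ (s - 1) : ℕ) : ZMod (2 * n)) * i with hj
    have hy : (QuaternionGroup.a i : QuaternionGroup n) ^ (2 ^ (s - 1)) = QuaternionGroup.a j :=
      a_pow i _
    have hy1 : QuaternionGroup.a j ≠ (1 : QuaternionGroup n) := by
      rw [← hy]
      exact pow_ne_one_of_lt_orderOf (by positivity)
        (by rw [hds]; exact Nat.pow_lt_pow_right one_lt_two (by omega))
    have hysq : (QuaternionGroup.a j : QuaternionGroup n) ^ 2 = 1 := by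
      rw [← hy, ← pow_mul]
      have : 2 ^ (s - 1) * 2 = 2 ^ s := by
        rw [← pow_succ]; congr 1; omega
      rw [this, ← hds]
      exact pow_orderOf_eq_one _
    have hjj : j + j = 0 := by
      rw [sq, QuaternionGroup.a_mul_a, QuaternionGroup.one_def] at hysq
      exact QuaternionGroup.a.inj hysq
    have hj0 : j ≠ 0 := by
      intro h
      apply hy1
      rw [h, QuaternionGroup.one_def]
    rcases two_torsion j hjj with h | h
    · exact absurd h hj0
    · rw [hy, h]

lemma degree_full {V : Type*} [Fintype V] [DecidableEq V] (G : SimpleGraph V)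
    [DecidableRel G.Adj] (u : V) (h : ∀ v, G.Adj u v ↔ v ≠ u) :
    G.degree u = Fintype.card V - 1 := by
  have hn : G.neighborFinset u = Finset.univ.erase u := by
    ext v
    simp [SimpleGraph.mem_neighborFinset, h v, Finset.mem_erase]
  rw [SimpleGraph.degree, hn, Finset.card_erase_of_mem (Finset.mem_univ u), Finset.card_univ]

/-- For `n = 2^r` (`r ≥ 1`) and the generalized quaternion group `Q_n`,
the vector with value `1` at the identity, `-1` at `a^n` and `0` elsewhere is an
eigenvector of `U(P(Q_n))` with eigenvalue `-α + (4n - 1)β + γ`. -/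
theorem univAdj_powerGraph_quaternion_eigen (r : ℕ) (hr : 1 ≤ r) (n : ℕ) [NeZero n]
    (hn : n = 2 ^ r) (α β γ η : ℝ) (hα : α ≠ 0) :
    (univAdj (powerGraph (QuaternionGroup n)) α β γ η).mulVec
        (fun g => if g = 1 then 1
          else if g = QuaternionGroup.a (n : ZMod (2 * n)) then -1 else 0) =
      (-α + (4 * (n : ℝ) - 1) * β + γ) •
      ((fun g => if g = 1 then 1
          else if g = QuaternionGroup.a (n : ZMod (2 * n)) then -1 else 0) :
        QuaternionGroup n → ℝ) := by
  classical
  set G := powerGraph (QuaternionGroup n) with hG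
  set z : QuaternionGroup n := QuaternionGroup.a (n : ZMod (2 * n)) with hzdef
  set X : QuaternionGroup n → ℝ :=
    fun g => if g = 1 then 1 else if g = z then -1 else 0 with hX
  have hz1 : z ≠ 1 := z_ne_one
  have hzsq : z ^ 2 = 1 := by
    rw [hzdef, sq, QuaternionGroup.a_mul_a, QuaternionGroup.one_def]
    congr 1
    rw [← Nat.cast_add, ZMod.natCast_eq_zero_iff]
    exact ⟨1, by ring⟩
  have hadj1 : ∀ g : QuaternionGroup n, g ≠ 1 → G.Adj g 1 := by
    intro g hg
    exact show _ ∧ _ from ⟨hg, (Fintype.card (QuaternionGroup n) : ℤ),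
      Or.inr (by rw [zpow_natCast, pow_card_eq_one])⟩
  have hadjz : ∀ g : QuaternionGroup n, g ≠ z → g ≠ 1 → G.Adj g z := by
    intro g hgz hg1
    obtain ⟨m, hm⟩ := exists_pow_eq_z r n hn g hg1
    exact show _ ∧ _ from ⟨hgz, (m : ℤ), Or.inr (by rw [zpow_natCast, hm, hzdef])⟩
  have hadj1z : G.Adj 1 z :=
    show _ ∧ _ from ⟨hz1.symm, (2 : ℤ), Or.inl (by
      rw [show (2 : ℤ) = ((2 : ℕ) : ℤ) by norm_num, zpow_natCast, hzsq])⟩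
  -- degrees
  letI : DecidableRel G.Adj := Classical.decRel _
  have hdeg1 : G.degree 1 = 4 * n - 1 := by
    rw [← QuaternionGroup.card (n := n)]
    apply degree_full
    intro v
    constructor
    · exact fun h => h.ne.symm
    · intro h; exact (hadj1 v h).symm
  have hdegz : G.degree z = 4 * n - 1 := by
    rw [← QuaternionGroup.card (n := n)]
    apply degree_full
    intro v
    constructor
    · exact fun h => h.ne.symm
    · intro h
      by_cases hv1 : v = 1
      · subst hv1; exact hadj1z.symm
      · exact (hadjz v h hv1).symm
  have hdegcast : ((4 * n - 1 : ℕ) : ℝ) = 4 * (n : ℝ) - 1 := by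
    have := NeZero.ne n
    push_cast [Nat.cast_sub (by omega : 1 ≤ 4 * n)]
    ring
  have hU : ∀ g v : QuaternionGroup n,
      univAdj G α β γ η g v =
        α * (if G.Adj g v then 1 else 0) + β * (if g = v then (G.degree g : ℝ) else 0)
          + γ * (if g = v then 1 else 0) + η := by
    intro g v
    simp only [univAdj, Matrix.add_apply, Matrix.smul_apply, SimpleGraph.adjMatrix_apply,
      Matrix.diagonal_apply, Matrix.one_apply, Matrix.of_apply, smul_eq_mul, mul_ite,
      mul_one, mul_zero]
  have hXz : X z = -1 := by simp [hX, hz1]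
  have hX1 : X 1 = 1 := by simp [hX]
  funext g
  rw [Matrix.mulVec]
  show ∑ v, univAdj G α β γ η g v * X v = _
  have hsum : ∑ v, univAdj G α β γ η g v * X v =
      ∑ v ∈ ({1, z} : Finset (QuaternionGroup n)), univAdj G α β γ η g v * X v := by
    apply (Finset.sum_subset (Finset.subset_univ _) _).symm
    intro v _ hv
    simp only [Finset.mem_insert, Finset.mem_singleton, not_or] at hv
    simp [hX, hv.1, hv.2]
  rw [hsum, Finset.sum_pair hz1.symm, hX1, hXz, hU g 1, hU g z, Pi.smul_apply, smul_eq_mul]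
  by_cases hg1 : g = 1
  · subst hg1
    have hA11 : ¬ G.Adj 1 1 := G.irrefl
    simp only [hX1, hA11, if_false, hadj1z, if_true, if_pos rfl, if_neg hz1.symm,
      hdeg1, hdegcast]
    ring
  · by_cases hgz : g = z
    · subst hgz
      have : ¬ G.Adj z z := G.irrefl
      simp only [hXz, hadj1 z hz1, if_true, this, if_false, if_neg hz1, if_pos rfl,
        hdegz, hdegcast]
      ring
    · have hXg : X g = 0 := by simp [hX, hg1, hgz]
      simp only [hXg, hadj1 g hg1, hadjz g hgz hg1, if_true, if_neg hg1, if_neg hgz]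
      ring
end
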